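/- Let G be a connected graph, R ≥ 1, and let J = P₁ ∪ P₂ ∪ P₃ be an R-tripod in G with root v and leaf endpoints v₁, v₂, v₃. Then any non-contractive embedding f : V(J) → ℝ of the tripod (with respect to the shortest-path metric of J) has expansion at least 2R; consequently any c-embedding of J into the line satisfies c ≥ 2R. -/

import Mathlib

/-- Lift a walk in `G` whose edges all belong to a subgraph `J` to a walk in `J.coe`,
with control over its support. -/
lemma tripod_lift_walk {V : Type*} {G : SimpleGraph V} (J : G.Subgraph) :
    ∀ {a b : V} (w : G.Walk a b), (∀ e ∈ w.edges, e ∈ J.edgeSet) →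
      ∀ (ha : a ∈ J.verts) (hb : b ∈ J.verts),
      ∃ w' : J.coe.Walk ⟨a, ha⟩ ⟨b, hb⟩, ∀ u ∈ w'.support, (u : V) ∈ w.support := by
  intro a b w
  induction w with
  | nil =>
    intro _ ha hb
    exact ⟨SimpleGraph.Walk.nil.copy rfl (Subtype.ext rfl), by simp⟩
  | @cons a c b h p ih =>
    intro he ha hb
    have hedge : s(a, c) ∈ J.edgeSet := he _ (by simp)
    have hadj : J.Adj a c := hedge
    have hc : c ∈ J.verts := hadj.snd_mem
    obtain ⟨w', hw'⟩ := ih (fun e he' => he e (by simp [he'])) hc hb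
    refine ⟨SimpleGraph.Walk.cons (show J.coe.Adj ⟨a, ha⟩ ⟨c, hc⟩ from hadj) w', ?_⟩
    intro u hu
    rcases (SimpleGraph.Walk.mem_support_iff _).mp hu with h' | h'
    · simp [h']
    · exact List.mem_cons_of_mem _ (hw' u h')

/-- In a walk whose support avoids the open interval `(lo, hi)`, starting low and ending
high, there is an edge jumping from `≤ lo` to `≥ hi`. -/
lemma tripod_gap {W : Type*} {H : SimpleGraph W} (f : W → ℝ) (lo hi : ℝ) (hlt : lo < hi) :
    ∀ {a b : W} (w : H.Walk a b), f a ≤ lo → hi ≤ f b →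
      (∀ u ∈ w.support, f u ≤ lo ∨ hi ≤ f u) →
      ∃ x y : W, H.Adj x y ∧ f x ≤ lo ∧ hi ≤ f y := by
  intro a b w
  induction w with
  | nil => intro ha hb _; exact absurd (hb.trans ha) (not_le.mpr hlt)
  | @cons a c b h p ih =>
    intro ha hb hav
    rcases hav c (by simp) with h' | h'
    · obtain ⟨x, y, hxy⟩ := ih h' hb (fun u hu => hav u (by simp [hu]))
      exact ⟨x, y, hxy⟩
    · exact ⟨a, c, h, ha, h'⟩

lemma tripod_dist_le {V : Type*} {G : SimpleGraph V} (J : G.Subgraph)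
    (hconn : J.coe.Connected) (x y : J.verts) :
    G.dist x.val y.val ≤ J.coe.dist x y := by
  obtain ⟨w, hw⟩ := (hconn x y).exists_walk_length_eq_dist
  calc G.dist x.val y.val ≤ (w.map J.hom).length := SimpleGraph.dist_le _
    _ = J.coe.dist x y := by rw [SimpleGraph.Walk.length_map, hw]

/-- Main argument: if `f` at the middle leaf `m` lies between its values at `a` and `b`. -/
lemma tripod_main {V : Type*} {G : SimpleGraph V} {R : ℕ} (hR : 1 ≤ R)
    {v a b m : V} (pa : G.Walk v a) (pb : G.Walk v b)
    (hma : ∀ u ∈ pa.support, R ≤ G.dist m u)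
    (hmb : ∀ u ∈ pb.support, R ≤ G.dist m u)
    (J : G.Subgraph) (hsa : pa.toSubgraph ≤ J) (hsb : pb.toSubgraph ≤ J)
    (hm : m ∈ J.verts) (hconn : J.coe.Connected)
    (f : J.verts → ℝ)
    (hnc : ∀ x y : J.verts, (J.coe.dist x y : ℝ) ≤ |f x - f y|)
    (ha : a ∈ J.verts) (hb : b ∈ J.verts)
    (hfa : f ⟨a, ha⟩ ≤ f ⟨m, hm⟩) (hfb : f ⟨m, hm⟩ ≤ f ⟨b, hb⟩) :
    ∃ x y : J.verts, x ≠ y ∧ (2 * R : ℝ) * J.coe.dist x y ≤ |f x - f y| := by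
  set t := f ⟨m, hm⟩ with ht
  -- every vertex of pa or pb is far from m in f-image
  have key : ∀ (u : V) (hu : u ∈ J.verts), R ≤ G.dist m u →
      f ⟨u, hu⟩ ≤ t - R ∨ t + R ≤ f ⟨u, hu⟩ := by
    intro u hu hdist
    have h1 : (R : ℝ) ≤ |f ⟨u, hu⟩ - t| := by
      have h2 : (G.dist m u : ℝ) ≤ J.coe.dist (⟨m, hm⟩ : J.verts) ⟨u, hu⟩ := by
        exact_mod_cast tripod_dist_le J hconn ⟨m, hm⟩ ⟨u, hu⟩
      have h3 := hnc ⟨m, hm⟩ ⟨u, hu⟩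
      have h4 : (R : ℝ) ≤ (G.dist m u : ℝ) := by exact_mod_cast hdist
      rw [abs_sub_comm] at h3
      linarith
    rcases abs_cases (f ⟨u, hu⟩ - t) with ⟨h5, _⟩ | ⟨h5, _⟩
    · right; linarith
    · left; linarith
  -- the walk from a to b through v
  set w : G.Walk a b := pa.reverse.append pb with hw
  have hedges : ∀ e ∈ w.edges, e ∈ J.edgeSet := by
    intro e he
    rw [hw, SimpleGraph.Walk.edges_append] at he
    rcases List.mem_append.mp he with h' | h'
    · rw [SimpleGraph.Walk.edges_reverse, List.mem_reverse] at h'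
      exact SimpleGraph.Subgraph.edgeSet_mono hsa
        (show e ∈ pa.toSubgraph.edgeSet by rw [SimpleGraph.Walk.edgeSet_toSubgraph]; exact h')
    · exact SimpleGraph.Subgraph.edgeSet_mono hsb
        (show e ∈ pb.toSubgraph.edgeSet by rw [SimpleGraph.Walk.edgeSet_toSubgraph]; exact h')
  obtain ⟨w', hw'⟩ := tripod_lift_walk J w hedges ha hb
  have hRpos : (0 : ℝ) < R := by exact_mod_cast Nat.lt_of_lt_of_le Nat.zero_lt_one hR
  have hlt : t - R < t + R := by linarith
  have hsupp : ∀ u ∈ w'.support, f u ≤ t - R ∨ t + R ≤ f u := by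
    intro u hu
    have hmem := hw' u hu
    rw [hw, SimpleGraph.Walk.support_append] at hmem
    have : (u : V) ∈ pa.support ∨ (u : V) ∈ pb.support := by
      rcases List.mem_append.mp hmem with h' | h'
      · left; rw [SimpleGraph.Walk.support_reverse, List.mem_reverse] at h'; exact h'
      · right; exact List.mem_of_mem_tail h'
    have := this.elim (fun h' => hma _ h') (fun h' => hmb _ h')
    have := key u.val u.prop this
    simpa using this
  have hfa' : f ⟨a, ha⟩ ≤ t - R := by
    rcases key a ha (hma a pa.end_mem_support) with h' | h'
    · exact h'
    · exfalso; linarith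
  have hfb' : t + R ≤ f ⟨b, hb⟩ := by
    rcases key b hb (hmb b pb.end_mem_support) with h' | h'
    · exfalso; linarith
    · exact h'
  obtain ⟨x, y, hadj, hx, hy⟩ := tripod_gap (H := J.coe) f (t - R) (t + R) hlt w' hfa' hfb' hsupp
  refine ⟨x, y, ?_, ?_⟩
  · intro hxy; rw [hxy] at hx; linarith
  · have hdist1 : J.coe.dist x y ≤ 1 := by
      have := SimpleGraph.dist_le (SimpleGraph.Walk.cons hadj SimpleGraph.Walk.nil)
      simpa using this
    have h2R : (2 * R : ℝ) ≤ |f x - f y| := by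
      rw [abs_sub_comm, abs_of_nonneg (by linarith)]
      linarith
    calc (2 * R : ℝ) * J.coe.dist x y ≤ (2 * R : ℝ) * 1 := by
          apply mul_le_mul_of_nonneg_left _ (by positivity)
          exact_mod_cast hdist1
      _ ≤ |f x - f y| := by linarith

/-- If `J = P₁ ∪ P₂ ∪ P₃` is an `R`-tripod in a connected graph `G`
(three paths sharing the root `v`, with leaf endpoints `v₁, v₂, v₃`, each leaf at
`G`-distance at least `R` from every vertex of the other two paths), then every
non-contractive embedding `f : V(J) → ℝ` (w.r.t. the shortest-path metric of `J`)
has expansion at least `2R`. -/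
theorem tripod_noncontractive_embedding_expansion {V : Type*} [Fintype V]
    (G : SimpleGraph V) (hG : G.Connected) (R : ℕ) (hR : 1 ≤ R)
    (v v₁ v₂ v₃ : V)
    (p₁ : G.Walk v v₁) (p₂ : G.Walk v v₂) (p₃ : G.Walk v v₃)
    (hp₁ : p₁.IsPath) (hp₂ : p₂.IsPath) (hp₃ : p₃.IsPath)
    (h12 : ∀ u ∈ p₂.support, R ≤ G.dist v₁ u)
    (h13 : ∀ u ∈ p₃.support, R ≤ G.dist v₁ u)
    (h21 : ∀ u ∈ p₁.support, R ≤ G.dist v₂ u)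
    (h23 : ∀ u ∈ p₃.support, R ≤ G.dist v₂ u)
    (h31 : ∀ u ∈ p₁.support, R ≤ G.dist v₃ u)
    (h32 : ∀ u ∈ p₂.support, R ≤ G.dist v₃ u)
    (J : G.Subgraph) (hJ : J = p₁.toSubgraph ⊔ p₂.toSubgraph ⊔ p₃.toSubgraph)
    (f : J.verts → ℝ)
    (hnc : ∀ x y : J.verts, (J.coe.dist x y : ℝ) ≤ |f x - f y|) :
    ∃ x y : J.verts, x ≠ y ∧ (2 * R : ℝ) * J.coe.dist x y ≤ |f x - f y| := by
  have hs₁ : p₁.toSubgraph ≤ J := by rw [hJ]; exact le_sup_left.trans le_sup_left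
  have hs₂ : p₂.toSubgraph ≤ J := by rw [hJ]; exact le_sup_right.trans le_sup_left
  have hs₃ : p₃.toSubgraph ≤ J := by rw [hJ]; exact le_sup_right
  have hc12 : (p₁.toSubgraph ⊔ p₂.toSubgraph).Connected :=
    SimpleGraph.Subgraph.connected_sup p₁.toSubgraph_connected.preconnected p₂.toSubgraph_connected.preconnected
      ⟨v, p₁.start_mem_verts_toSubgraph, p₂.start_mem_verts_toSubgraph⟩
  have hcJ : J.Connected := by
    rw [hJ]
    exact SimpleGraph.Subgraph.connected_sup hc12.preconnected p₃.toSubgraph_connected.preconnected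
      ⟨v, Or.inl p₁.start_mem_verts_toSubgraph, p₃.start_mem_verts_toSubgraph⟩
  have hconn : J.coe.Connected := hcJ.coe
  have m₁ : v₁ ∈ J.verts := hs₁.1 p₁.end_mem_verts_toSubgraph
  have m₂ : v₂ ∈ J.verts := hs₂.1 p₂.end_mem_verts_toSubgraph
  have m₃ : v₃ ∈ J.verts := hs₃.1 p₃.end_mem_verts_toSubgraph
  rcases le_total (f ⟨v₁, m₁⟩) (f ⟨v₂, m₂⟩) with hab | hab
  · rcases le_total (f ⟨v₂, m₂⟩) (f ⟨v₃, m₃⟩) with hbc | hbc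
    · exact tripod_main hR p₁ p₃ h21 h23 J hs₁ hs₃ m₂ hconn f hnc m₁ m₃ hab hbc
    · rcases le_total (f ⟨v₁, m₁⟩) (f ⟨v₃, m₃⟩) with hac | hac
      · exact tripod_main hR p₁ p₂ h31 h32 J hs₁ hs₂ m₃ hconn f hnc m₁ m₂ hac hbc
      · exact tripod_main hR p₃ p₂ h13 h12 J hs₃ hs₂ m₁ hconn f hnc m₃ m₂ hac hab
  · rcases le_total (f ⟨v₁, m₁⟩) (f ⟨v₃, m₃⟩) with hac | hac
    · exact tripod_main hR p₂ p₃ h12 h13 J hs₂ hs₃ m₁ hconn f hnc m₂ m₃ hab hac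
    · rcases le_total (f ⟨v₂, m₂⟩) (f ⟨v₃, m₃⟩) with hbc | hbc
      · exact tripod_main hR p₂ p₁ h32 h31 J hs₂ hs₁ m₃ hconn f hnc m₂ m₁ hbc hac
      · exact tripod_main hR p₃ p₁ h23 h21 J hs₃ hs₁ m₂ hconn f hnc m₃ m₁ hbc hab
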